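/- Let M be a compact metric space with a Borel probability measure Leb, and let f : M → M be continuous. Define AA₁ := {x ∈ M : the empirical measures of x converge weakly* to a limit μ_x, and μ_x is pseudo-physical}. If Leb(AA₁) = 1, then the set O_f of pseudo-physical measures equals the weak* closure of {μ_x : x ∈ AA₁}. -/

import Mathlib

open MeasureTheory Filter Topology Metric Set Function

/-- The explicit metric `d` on measures induced by a countable dense family of test
functions, metrizing the weak* topology. -/
noncomputable def wd {M : Type*} [MetricSpace M] [MeasurableSpace M]
    (Ψ : ℕ → M → ℝ) (μ ν : Measure M) : ℝ :=
  ∑' i : ℕ, (1 / 2 : ℝ) ^ (i + 1) * |(∫ x, Ψ i x ∂μ) - ∫ x, Ψ i x ∂ν|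

/-- Convergence of the empirical measures along the orbit of `x` to `μ` in the weak*
topology. -/
def empConv {M : Type*} [MetricSpace M] [MeasurableSpace M] [BorelSpace M]
    (f : M → M) (x : M) (μ : MeasureTheory.Measure M) : Prop :=
  ∀ g : M → ℝ, Continuous g →
    Filter.Tendsto (fun n : ℕ => (n : ℝ)⁻¹ * ∑ j ∈ Finset.range n, g (f^[j] x))
      Filter.atTop (nhds (∫ y, g y ∂μ))

/-- The set `pω(x)` of weak* limit points of the empirical measures along the orbit of `x`. -/
def pOmega {M : Type*} [MetricSpace M] [MeasurableSpace M] [BorelSpace M]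
    (f : M → M) (x : M) : Set (MeasureTheory.Measure M) :=
  {ν | MeasureTheory.IsProbabilityMeasure ν ∧ ∃ φ : ℕ → ℕ, StrictMono φ ∧
    ∀ g : M → ℝ, Continuous g →
      Filter.Tendsto
        (fun n : ℕ => ((φ n : ℝ))⁻¹ * ∑ j ∈ Finset.range (φ n), g (f^[j] x)) Filter.atTop
        (nhds (∫ y, g y ∂ν))}

/-- `μ` is pseudo-physical: for every `ε > 0`, the set of points `x` with
`d(pω(x), μ) < ε` has positive Lebesgue measure. -/
def pseudoPhysical {M : Type*} [MetricSpace M] [MeasurableSpace M] [BorelSpace M]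
    (Leb : MeasureTheory.Measure M) (f : M → M) (Ψ : ℕ → M → ℝ)
    (μ : MeasureTheory.Measure M) : Prop :=
  MeasureTheory.IsProbabilityMeasure μ ∧
    ∀ ε > (0 : ℝ), 0 < Leb {x | ∃ ν ∈ pOmega f x, wd Ψ ν μ < ε}

section Aux17

variable {M : Type*} [MetricSpace M] [CompactSpace M] [MeasurableSpace M] [BorelSpace M]

lemma aux17_integrable (κ : Measure M) [IsFiniteMeasure κ] {g : M → ℝ}
    (hg : Continuous g) : Integrable g κ := by
  exact (BoundedContinuousFunction.mkOfCompact ⟨g, hg⟩).integrable κ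

lemma aux17_integral_mem (κ : Measure M) [IsProbabilityMeasure κ] {g : M → ℝ}
    (hg : Continuous g) (h01 : ∀ x, g x ∈ Set.Icc (0:ℝ) 1) :
    ∫ x, g x ∂κ ∈ Set.Icc (0:ℝ) 1 := by
  refine ⟨integral_nonneg fun x => (h01 x).1, ?_⟩
  calc ∫ x, g x ∂κ ≤ ∫ _x, (1:ℝ) ∂κ :=
        integral_mono (aux17_integrable κ hg) (integrable_const 1) fun x => (h01 x).2
    _ = 1 := by simp

lemma aux17_summable_w : Summable (fun i : ℕ => (1/2:ℝ)^(i+1)) := by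
  simpa [pow_succ] using summable_geometric_two.mul_right (1/2:ℝ)

lemma aux17_summable_term {a : ℕ → ℝ} (ha : ∀ i, |a i| ≤ 1) :
    Summable (fun i : ℕ => (1/2:ℝ)^(i+1) * |a i|) := by
  refine Summable.of_nonneg_of_le (fun i => by positivity) (fun i => ?_) aux17_summable_w
  exact mul_le_of_le_one_right (by positivity) (ha i)

lemma aux17_wd_triangle (Ψ : ℕ → M → ℝ) (hΨc : ∀ i, Continuous (Ψ i))
    (hΨ01 : ∀ i x, Ψ i x ∈ Set.Icc (0:ℝ) 1)
    (a b c : Measure M) [IsProbabilityMeasure a] [IsProbabilityMeasure b]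
    [IsProbabilityMeasure c] :
    wd Ψ a c ≤ wd Ψ a b + wd Ψ b c := by
  have habs : ∀ (κ κ' : Measure M) [IsProbabilityMeasure κ] [IsProbabilityMeasure κ'], ∀ i,
      |(∫ x, Ψ i x ∂κ) - ∫ x, Ψ i x ∂κ'| ≤ 1 := by
    intro κ κ' _ _ i
    have h1 := aux17_integral_mem κ (hΨc i) (hΨ01 i)
    have h2 := aux17_integral_mem κ' (hΨc i) (hΨ01 i)
    rw [abs_le]
    constructor
    · linarith [h1.1, h2.2]
    · linarith [h1.2, h2.1]
  have Sab := aux17_summable_term (fun i => habs a b i)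
  have Sbc := aux17_summable_term (fun i => habs b c i)
  have Sac := aux17_summable_term (fun i => habs a c i)
  have key : (∑' i : ℕ, (1/2:ℝ)^(i+1) * |(∫ x, Ψ i x ∂a) - ∫ x, Ψ i x ∂c|)
      ≤ ∑' i : ℕ, ((1/2:ℝ)^(i+1) * |(∫ x, Ψ i x ∂a) - ∫ x, Ψ i x ∂b|
        + (1/2:ℝ)^(i+1) * |(∫ x, Ψ i x ∂b) - ∫ x, Ψ i x ∂c|) := by
    refine Summable.tsum_le_tsum (fun i => ?_) Sac (Sab.add Sbc)
    rw [← mul_add]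
    exact mul_le_mul_of_nonneg_left (abs_sub_le _ _ _) (by positivity)
  calc wd Ψ a c ≤ _ := key
    _ = wd Ψ a b + wd Ψ b c := Summable.tsum_add Sab Sbc

lemma aux17_avg_mem (Ψ : ℕ → M → ℝ) (hΨ01 : ∀ i x, Ψ i x ∈ Set.Icc (0:ℝ) 1)
    (f : M → M) (i : ℕ) (x : M) (n : ℕ) :
    (n : ℝ)⁻¹ * ∑ j ∈ Finset.range n, Ψ i (f^[j] x) ∈ Set.Icc (0:ℝ) 1 := by
  have h0 : (0:ℝ) ≤ ∑ j ∈ Finset.range n, Ψ i (f^[j] x) :=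
    Finset.sum_nonneg fun j _ => (hΨ01 i _).1
  have h1 : ∑ j ∈ Finset.range n, Ψ i (f^[j] x) ≤ (n : ℝ) := by
    calc ∑ j ∈ Finset.range n, Ψ i (f^[j] x) ≤ ∑ _j ∈ Finset.range n, (1:ℝ) :=
          Finset.sum_le_sum fun j _ => (hΨ01 i _).2
      _ = (n : ℝ) := by simp
  constructor
  · positivity
  · rcases Nat.eq_zero_or_pos n with hn | hn
    · simp [hn]
    · have hn' : (0:ℝ) < (n : ℝ) := by exact_mod_cast hn
      rw [inv_mul_le_iff₀ hn']
      linarith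

/-- An auxiliary explicitly-computable "distance from the `n`-th empirical measure of `x`
to `μ`". -/
noncomputable def aux17_D (Ψ : ℕ → M → ℝ) (f : M → M) (μ : Measure M) (n : ℕ) (x : M) : ℝ :=
  ∑' i : ℕ, (1/2:ℝ)^(i+1) *
    |(n : ℝ)⁻¹ * ∑ j ∈ Finset.range n, Ψ i (f^[j] x) - ∫ y, Ψ i y ∂μ|

lemma aux17_abs_le (Ψ : ℕ → M → ℝ) (hΨc : ∀ i, Continuous (Ψ i))
    (hΨ01 : ∀ i x, Ψ i x ∈ Set.Icc (0:ℝ) 1) (f : M → M)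
    (μ : Measure M) [IsProbabilityMeasure μ] (i : ℕ) (x : M) (n : ℕ) :
    |(n : ℝ)⁻¹ * ∑ j ∈ Finset.range n, Ψ i (f^[j] x) - ∫ y, Ψ i y ∂μ| ≤ 1 := by
  have h1 := aux17_avg_mem Ψ hΨ01 f i x n
  have h2 := aux17_integral_mem μ (hΨc i) (hΨ01 i)
  rw [abs_le]
  constructor
  · linarith [h1.1, h2.2]
  · linarith [h1.2, h2.1]

lemma aux17_D_continuous (Ψ : ℕ → M → ℝ) (hΨc : ∀ i, Continuous (Ψ i))
    (hΨ01 : ∀ i x, Ψ i x ∈ Set.Icc (0:ℝ) 1) (f : M → M) (hf : Continuous f)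
    (μ : Measure M) [IsProbabilityMeasure μ] (n : ℕ) :
    Continuous (aux17_D Ψ f μ n) := by
  apply continuous_tsum (u := fun i : ℕ => (1/2:ℝ)^(i+1))
  · intro i
    have hWc : Continuous fun x : M =>
        (n : ℝ)⁻¹ * ∑ j ∈ Finset.range n, Ψ i (f^[j] x) := by
      exact continuous_const.mul
        (continuous_finset_sum _ fun j _ => (hΨc i).comp (hf.iterate j))
    exact continuous_const.mul ((hWc.sub continuous_const).abs)
  · exact aux17_summable_w
  · intro i x
    rw [Real.norm_eq_abs, abs_mul, abs_abs, abs_of_nonneg (by positivity :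
      (0:ℝ) ≤ (1/2:ℝ)^(i+1))]
    exact mul_le_of_le_one_right (by positivity) (aux17_abs_le Ψ hΨc hΨ01 f μ i x n)

lemma aux17_D_tendsto (Ψ : ℕ → M → ℝ) (hΨc : ∀ i, Continuous (Ψ i))
    (hΨ01 : ∀ i x, Ψ i x ∈ Set.Icc (0:ℝ) 1) (f : M → M)
    (μ ν : Measure M) [IsProbabilityMeasure μ] [IsProbabilityMeasure ν]
    (x : M) (u : ℕ → ℕ)
    (hu : ∀ i, Tendsto
      (fun m : ℕ => ((u m : ℝ))⁻¹ * ∑ j ∈ Finset.range (u m), Ψ i (f^[j] x)) atTop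
      (𝓝 (∫ y, Ψ i y ∂ν))) :
    Tendsto (fun m : ℕ => aux17_D Ψ f μ (u m) x) atTop (𝓝 (wd Ψ ν μ)) := by
  have : Tendsto (fun m : ℕ => ∑' i : ℕ, (1/2:ℝ)^(i+1) *
      |(u m : ℝ)⁻¹ * ∑ j ∈ Finset.range (u m), Ψ i (f^[j] x) - ∫ y, Ψ i y ∂μ|) atTop
      (𝓝 (∑' i : ℕ, (1/2:ℝ)^(i+1) * |(∫ y, Ψ i y ∂ν) - ∫ y, Ψ i y ∂μ|)) := by
    apply tendsto_tsum_of_dominated_convergence (bound := fun i : ℕ => (1/2:ℝ)^(i+1))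
      aux17_summable_w
    · intro i
      exact (((hu i).sub tendsto_const_nhds).abs).const_mul _
    · filter_upwards with m i
      rw [Real.norm_eq_abs, abs_mul, abs_abs, abs_of_nonneg (by positivity :
        (0:ℝ) ≤ (1/2:ℝ)^(i+1))]
      exact mul_le_of_le_one_right (by positivity) (aux17_abs_le Ψ hΨc hΨ01 f μ i x (u m))
  exact this

end Aux17

theorem stmt17 {M : Type*} [MetricSpace M] [CompactSpace M]
    [MeasurableSpace M] [BorelSpace M]
    (Ψ : ℕ → M → ℝ)
    (hΨc : ∀ i, Continuous (Ψ i))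
    (hΨ01 : ∀ i x, Ψ i x ∈ Set.Icc (0 : ℝ) 1)
    (hdense : ∀ g : M → ℝ, Continuous g → (∀ x, g x ∈ Set.Icc (0 : ℝ) 1) →
      ∀ ε > (0 : ℝ), ∃ i, ∀ x, |g x - Ψ i x| ≤ ε)
    (Leb : Measure M) (hLeb : IsProbabilityMeasure Leb)
    (f : M → M) (hf : Continuous f)
    -- `AA₁` has full Lebesgue measure
    (hAA1 : Leb {x : M | ∃ μx : Measure M, IsProbabilityMeasure μx ∧ empConv f x μx ∧
      pseudoPhysical Leb f Ψ μx} = 1) :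
    -- `O_f` equals the weak* closure of `{μ_x : x ∈ AA₁}`
    {μ : Measure M | pseudoPhysical Leb f Ψ μ} =
      {μ : Measure M | IsProbabilityMeasure μ ∧ ∀ ε > (0 : ℝ),
        ∃ (x : M) (μx : Measure M), IsProbabilityMeasure μx ∧ empConv f x μx ∧
          pseudoPhysical Leb f Ψ μx ∧ wd Ψ μx μ < ε} := by
  ext μ
  simp only [Set.mem_setOf_eq]
  constructor
  · rintro ⟨hμprob, hpos⟩
    haveI := hμprob
    refine ⟨hμprob, ?_⟩
    intro ε hε
    have hε2 : (0:ℝ) < ε / 2 := half_pos hε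
    -- the measurable mediating set `U`
    set U : Set M := {x : M | ∀ N : ℕ, ∃ n : ℕ, N ≤ n ∧ aux17_D Ψ f μ n x < ε / 2}
      with hUdef
    have hUmeas : MeasurableSet U := by
      have : U = ⋂ N : ℕ, ⋃ n : ℕ, ⋃ _h : N ≤ n, {x : M | aux17_D Ψ f μ n x < ε / 2} := by
        ext x
        simp [hUdef]
      rw [this]
      exact MeasurableSet.iInter fun N => MeasurableSet.iUnion fun n =>
        MeasurableSet.iUnion fun _ =>
          (isOpen_lt (aux17_D_continuous Ψ hΨc hΨ01 f hf μ n) continuous_const).measurableSet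
    -- the set from pseudo-physicality of `μ` is contained in `U`
    have hAU : {x : M | ∃ ν ∈ pOmega f x, wd Ψ ν μ < ε / 2} ⊆ U := by
      rintro x ⟨ν, ⟨hνprob, φ, hφ, hφconv⟩, hνwd⟩
      haveI := hνprob
      have hDt : Tendsto (fun m : ℕ => aux17_D Ψ f μ (φ m) x) atTop (𝓝 (wd Ψ ν μ)) :=
        aux17_D_tendsto Ψ hΨc hΨ01 f μ ν x φ (fun i => hφconv (Ψ i) (hΨc i))
      have hev : ∀ᶠ m in atTop, aux17_D Ψ f μ (φ m) x < ε / 2 :=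
        hDt.eventually (Filter.eventually_iff_exists_mem.mpr
          ⟨Set.Iio (ε / 2), Iio_mem_nhds hνwd, fun y hy => hy⟩)
      rw [eventually_atTop] at hev
      obtain ⟨Mb, hMb⟩ := hev
      intro N
      exact ⟨φ (max Mb N), le_trans (le_max_right _ _) (hφ.le_apply),
        hMb _ (le_max_left _ _)⟩
    have hUpos : 0 < Leb U := lt_of_lt_of_le (hpos (ε / 2) hε2) (measure_mono hAU)
    have hUcompl : Leb Uᶜ < 1 := by
      rw [prob_compl_eq_one_sub hUmeas]
      exact ENNReal.sub_lt_self ENNReal.one_ne_top one_ne_zero hUpos.ne'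
    -- intersect with the full-measure set `AA₁`
    have hBU : ∃ x : M, (∃ μx : Measure M, IsProbabilityMeasure μx ∧ empConv f x μx ∧
        pseudoPhysical Leb f Ψ μx) ∧ x ∈ U := by
      by_contra h
      push_neg at h
      have hsub : {x : M | ∃ μx : Measure M, IsProbabilityMeasure μx ∧ empConv f x μx ∧
          pseudoPhysical Leb f Ψ μx} ⊆ Uᶜ := fun x hx => h x hx
      have hle := (measure_mono hsub).trans_lt hUcompl
      rw [hAA1] at hle
      exact lt_irrefl _ hle
    obtain ⟨x, ⟨μx, hμxprob, hempx, hppx⟩, hxU⟩ := hBU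
    haveI := hμxprob
    have hDt : Tendsto (fun n : ℕ => aux17_D Ψ f μ n x) atTop (𝓝 (wd Ψ μx μ)) :=
      aux17_D_tendsto Ψ hΨc hΨ01 f μ μx x id (fun i => hempx (Ψ i) (hΨc i))
    have hle : wd Ψ μx μ ≤ ε / 2 := by
      by_contra hlt
      push_neg at hlt
      have hev : ∀ᶠ n in atTop, ε / 2 < aux17_D Ψ f μ n x :=
        hDt.eventually (Filter.eventually_iff_exists_mem.mpr
          ⟨Set.Ioi (ε / 2), Ioi_mem_nhds hlt, fun y hy => hy⟩)
      rw [eventually_atTop] at hev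
      obtain ⟨Mb, hMb⟩ := hev
      obtain ⟨n, hn, hnlt⟩ := hxU Mb
      exact lt_asymm (hMb n hn) hnlt
    exact ⟨x, μx, hμxprob, hempx, hppx, lt_of_le_of_lt hle (half_lt_self hε)⟩
  · rintro ⟨hμprob, happrox⟩
    haveI := hμprob
    refine ⟨hμprob, ?_⟩
    intro ε hε
    obtain ⟨x, μx, hμxprob, hempx, hppx, hwd⟩ := happrox (ε / 2) (half_pos hε)
    haveI := hμxprob
    have hpos := hppx.2 (ε / 2) (half_pos hε)
    refine lt_of_lt_of_le hpos (measure_mono ?_)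
    rintro y ⟨ν, hν, hνwd⟩
    haveI := hν.1
    refine ⟨ν, hν, ?_⟩
    calc wd Ψ ν μ ≤ wd Ψ ν μx + wd Ψ μx μ := aux17_wd_triangle Ψ hΨc hΨ01 ν μx μ
      _ < ε / 2 + ε / 2 := add_lt_add hνwd hwd
      _ = ε := add_halves ε
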